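/- Let E be a finite-dimensional real Banach space with continuous dual E*, let S(E*) = {u ∈ E* : ‖u‖ = 1} be the dual unit sphere, and let V be the smallest subset of the space ℝ^(E*) of all functions E* → ℝ (with pointwise operations, order, and product) containing the evaluation maps δ_x(x*) = x*(x) for x ∈ E that is a linear subspace closed under pointwise products and pointwise binary suprema. Then for every f ∈ V: (i) for every u ∈ S(E*) the limit lim_{r→0⁺} f(r·u)/r exists, and the function Sf : [0,1] × S(E*) → ℝ defined by Sf(r,u) = f(r·u)/r for r ≠ 0 and Sf(0,u) = lim_{r→0⁺} f(r·u)/r is continuous; (ii) the map f ↦ Sf is linear and satisfies S(f ⊔ g) = Sf ⊔ Sg pointwise and S(f·g) = Sf ⋆ Sg, where (F ⋆ G)(r,u) = r·F(r,u)·G(r,u). -/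

import Mathlib

open scoped Topology

/-- A subset of the function space `W → ℝ` (with pointwise operations, order and
product) which is a linear subspace closed under pointwise products and pointwise
binary suprema. -/
def IsSublatticeSubalgebra {W : Type} (S : Set (W → ℝ)) : Prop :=
  (0 : W → ℝ) ∈ S ∧
  (∀ f g, f ∈ S → g ∈ S → f + g ∈ S) ∧
  (∀ (c : ℝ) (f), f ∈ S → c • f ∈ S) ∧
  (∀ f g, f ∈ S → g ∈ S → f * g ∈ S) ∧
  (∀ f g, f ∈ S → g ∈ S → f ⊔ g ∈ S)

/-- The smallest sublattice-subalgebra of `W → ℝ` containing `G`. -/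
def latAlgGen {W : Type} (G : Set (W → ℝ)) : Set (W → ℝ) :=
  ⋂₀ {S | IsSublatticeSubalgebra S ∧ G ⊆ S}

/-- The evaluation map `δ_x : E* → ℝ`, `δ_x x* = x* x`. -/
def evalMapD (E : Type) [NormedAddCommGroup E] [NormedSpace ℝ E] (x : E) :
    (E →L[ℝ] ℝ) → ℝ :=
  fun φ => φ x

/-- The sublattice-subalgebra of `ℝ^(E*)` generated by the evaluation maps. -/
def freeVLA (E : Type) [NormedAddCommGroup E] [NormedSpace ℝ E] :
    Set ((E →L[ℝ] ℝ) → ℝ) :=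
  latAlgGen (Set.range (evalMapD E))

/-- The compact space `[0,1] × S(E*)`. -/
abbrev cylSphere (E : Type) [NormedAddCommGroup E] [NormedSpace ℝ E] : Type :=
  ↥(Set.Icc (0 : ℝ) 1) × ↥(Metric.sphere (0 : E →L[ℝ] ℝ) 1)


section Aux

variable {E : Type} [NormedAddCommGroup E] [NormedSpace ℝ E]

/-- Restriction map from ℝ to Icc 0 1 composed with F. -/
private lemma tendsto_comp_projIcc (F : C((↥(Set.Icc (0:ℝ) 1) × ↥(Metric.sphere (0 : E →L[ℝ] ℝ) 1)), ℝ))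
    (u : ↥(Metric.sphere (0 : E →L[ℝ] ℝ) 1)) :
    Filter.Tendsto (fun s : ℝ => F (Set.projIcc 0 1 zero_le_one s, u)) (𝓝[>] (0:ℝ))
      (𝓝 (F (⟨0, Set.left_mem_Icc.mpr zero_le_one⟩, u))) := by
  have hc : Continuous fun s : ℝ => F (Set.projIcc 0 1 zero_le_one s, u) :=
    F.continuous.comp ((continuous_projIcc).prodMk continuous_const)
  have h0 : Set.projIcc (0:ℝ) 1 zero_le_one 0 = ⟨0, Set.left_mem_Icc.mpr zero_le_one⟩ := by
    simp [Set.projIcc_of_mem, Set.left_mem_Icc.mpr zero_le_one]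
  have := hc.tendsto 0
  rw [h0] at this
  exact this.mono_left nhdsWithin_le_nhds

private lemma eventually_eq_on_Ioc
    (F : C((↥(Set.Icc (0:ℝ) 1) × ↥(Metric.sphere (0 : E →L[ℝ] ℝ) 1)), ℝ))
    (f : (E →L[ℝ] ℝ) → ℝ)
    (hF : ∀ (r : ↥(Set.Icc (0:ℝ) 1)) (u : ↥(Metric.sphere (0 : E →L[ℝ] ℝ) 1)),
      (r : ℝ) ≠ 0 → F (r, u) = f ((r : ℝ) • u.1) / (r : ℝ))
    (u : ↥(Metric.sphere (0 : E →L[ℝ] ℝ) 1)) :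
    (fun s : ℝ => F (Set.projIcc 0 1 zero_le_one s, u)) =ᶠ[𝓝[>] (0:ℝ)]
      (fun s : ℝ => f (s • u.1) / s) := by
  filter_upwards [Ioc_mem_nhdsGT_of_mem (by simp : (0:ℝ) ∈ Set.Ico (0:ℝ) 1)] with s hs
  have hmem : s ∈ Set.Icc (0:ℝ) 1 := ⟨hs.1.le, hs.2⟩
  rw [Set.projIcc_of_mem zero_le_one hmem, hF ⟨s, hmem⟩ u (ne_of_gt hs.1)]

private lemma tendsto_of_ext (F : C((↥(Set.Icc (0:ℝ) 1) × ↥(Metric.sphere (0 : E →L[ℝ] ℝ) 1)), ℝ))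
    (f : (E →L[ℝ] ℝ) → ℝ)
    (hF : ∀ (r : ↥(Set.Icc (0:ℝ) 1)) (u : ↥(Metric.sphere (0 : E →L[ℝ] ℝ) 1)),
      (r : ℝ) ≠ 0 → F (r, u) = f ((r : ℝ) • u.1) / (r : ℝ))
    (u : ↥(Metric.sphere (0 : E →L[ℝ] ℝ) 1)) :
    Filter.Tendsto (fun s : ℝ => f (s • u.1) / s) (𝓝[>] (0:ℝ))
      (𝓝 (F (⟨0, Set.left_mem_Icc.mpr zero_le_one⟩, u))) :=
  (tendsto_comp_projIcc F u).congr' (eventually_eq_on_Ioc F f hF u)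

/-- Uniqueness of continuous extension. -/
private lemma ext_unique (F G : C((↥(Set.Icc (0:ℝ) 1) × ↥(Metric.sphere (0 : E →L[ℝ] ℝ) 1)), ℝ))
    (h : ∀ (r : ↥(Set.Icc (0:ℝ) 1)) (u : ↥(Metric.sphere (0 : E →L[ℝ] ℝ) 1)),
      (r : ℝ) ≠ 0 → F (r, u) = G (r, u)) : F = G := by
  ext ⟨r, u⟩
  by_cases hr : (r : ℝ) = 0
  · have hr0 : r = ⟨0, Set.left_mem_Icc.mpr zero_le_one⟩ := Subtype.ext hr
    subst hr0
    have hFu := tendsto_comp_projIcc F u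
    have hGu := tendsto_comp_projIcc G u
    have heq : (fun s : ℝ => F (Set.projIcc 0 1 zero_le_one s, u)) =ᶠ[𝓝[>] (0:ℝ)]
        (fun s : ℝ => G (Set.projIcc 0 1 zero_le_one s, u)) := by
      filter_upwards [Ioc_mem_nhdsGT_of_mem (by simp : (0:ℝ) ∈ Set.Ico (0:ℝ) 1)] with s hs
      have hmem : s ∈ Set.Icc (0:ℝ) 1 := ⟨hs.1.le, hs.2⟩
      rw [Set.projIcc_of_mem zero_le_one hmem]
      exact h ⟨s, hmem⟩ u (ne_of_gt hs.1)
    exact tendsto_nhds_unique (hFu.congr' heq) hGu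
  · exact h r u hr

/-- Every element of `freeVLA E` has a continuous extension. -/
private lemma exists_ext (f : (E →L[ℝ] ℝ) → ℝ) (hf : f ∈ freeVLA E) :
    ∃ F : C((↥(Set.Icc (0:ℝ) 1) × ↥(Metric.sphere (0 : E →L[ℝ] ℝ) 1)), ℝ),
      ∀ (r : ↥(Set.Icc (0:ℝ) 1)) (u : ↥(Metric.sphere (0 : E →L[ℝ] ℝ) 1)),
        (r : ℝ) ≠ 0 → F (r, u) = f ((r : ℝ) • u.1) / (r : ℝ) := by
  refine hf {g | ∃ F : C((↥(Set.Icc (0:ℝ) 1) × ↥(Metric.sphere (0 : E →L[ℝ] ℝ) 1)), ℝ),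
      ∀ (r : ↥(Set.Icc (0:ℝ) 1)) (u : ↥(Metric.sphere (0 : E →L[ℝ] ℝ) 1)),
        (r : ℝ) ≠ 0 → F (r, u) = g ((r : ℝ) • u.1) / (r : ℝ)} ⟨⟨?_, ?_, ?_, ?_, ?_⟩, ?_⟩
  · -- zero
    exact ⟨0, fun r u hr => by simp⟩
  · -- add
    rintro f g ⟨F, hF⟩ ⟨G, hG⟩
    exact ⟨F + G, fun r u hr => by
      simp [hF r u hr, hG r u hr, Pi.add_apply, add_div]⟩
  · -- smul
    rintro c f ⟨F, hF⟩
    exact ⟨c • F, fun r u hr => by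
      simp [hF r u hr, Pi.smul_apply, smul_eq_mul, mul_div_assoc]⟩
  · -- mul
    rintro f g ⟨F, hF⟩ ⟨G, hG⟩
    refine ⟨⟨fun p => (p.1 : ℝ) * F p * G p, ?_⟩, fun r u hr => ?_⟩
    · exact ((continuous_subtype_val.comp continuous_fst).mul F.continuous).mul G.continuous
    · show (r : ℝ) * F (r, u) * G (r, u) = (f * g) ((r : ℝ) • u.1) / (r : ℝ)
      rw [hF r u hr, hG r u hr]
      field_simp
      rfl
  · -- sup
    rintro f g ⟨F, hF⟩ ⟨G, hG⟩
    refine ⟨F ⊔ G, fun r u hr => ?_⟩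
    have hrpos : (0:ℝ) < r := lt_of_le_of_ne r.2.1 (Ne.symm hr)
    show max (F (r, u)) (G (r, u)) = (f ⊔ g) ((r:ℝ) • u.1) / (r:ℝ)
    rw [hF r u hr, hG r u hr]
    show _ = max (f ((r:ℝ) • u.1)) (g ((r:ℝ) • u.1)) / (r:ℝ)
    rw [div_eq_inv_mul, div_eq_inv_mul, div_eq_inv_mul, mul_max_of_nonneg _ _ (by positivity)]
  · -- generators
    rintro _ ⟨x, rfl⟩
    refine ⟨⟨fun p => (p.2 : E →L[ℝ] ℝ) x, ?_⟩, fun r u hr => ?_⟩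
    · exact (ContinuousLinearMap.apply ℝ ℝ x).continuous.comp
        (continuous_subtype_val.comp continuous_snd)
    · show (u : E →L[ℝ] ℝ) x = evalMapD E x ((r:ℝ) • u.1) / (r:ℝ)
      simp [evalMapD, mul_div_assoc]
      field_simp

end Aux
theorem stmt10 (E : Type) [NormedAddCommGroup E] [NormedSpace ℝ E] [CompleteSpace E]
    [FiniteDimensional ℝ E] :
    ∃ S : {f : (E →L[ℝ] ℝ) → ℝ // f ∈ freeVLA E} → C(cylSphere E, ℝ),
      -- (i) `S f` takes the required values for `r ≠ 0` ...
      (∀ (f : {f // f ∈ freeVLA E}) (r : ↥(Set.Icc (0 : ℝ) 1))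
          (u : ↥(Metric.sphere (0 : E →L[ℝ] ℝ) 1)), (r : ℝ) ≠ 0 →
          S f (r, u) = f.1 ((r : ℝ) • u.1) / (r : ℝ)) ∧
      -- ... and at `r = 0` it is the (existing) right-hand limit of `f (r u)/r`
      (∀ (f : {f // f ∈ freeVLA E}) (u : ↥(Metric.sphere (0 : E →L[ℝ] ℝ) 1)),
          Filter.Tendsto (fun r : ℝ => f.1 (r • u.1) / r) (𝓝[>] (0 : ℝ))
            (𝓝 (S f (⟨0, Set.left_mem_Icc.mpr zero_le_one⟩, u)))) ∧
      -- (ii) the map `f ↦ S f` is linear ...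
      (∀ (f g : (E →L[ℝ] ℝ) → ℝ) (hf : f ∈ freeVLA E) (hg : g ∈ freeVLA E)
          (hfg : f + g ∈ freeVLA E),
          S ⟨f + g, hfg⟩ = S ⟨f, hf⟩ + S ⟨g, hg⟩) ∧
      (∀ (c : ℝ) (f : (E →L[ℝ] ℝ) → ℝ) (hf : f ∈ freeVLA E)
          (hcf : c • f ∈ freeVLA E),
          S ⟨c • f, hcf⟩ = c • S ⟨f, hf⟩) ∧
      -- ... preserves binary suprema ...
      (∀ (f g : (E →L[ℝ] ℝ) → ℝ) (hf : f ∈ freeVLA E) (hg : g ∈ freeVLA E)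
          (hfg : f ⊔ g ∈ freeVLA E),
          S ⟨f ⊔ g, hfg⟩ = S ⟨f, hf⟩ ⊔ S ⟨g, hg⟩) ∧
      -- ... and transforms the pointwise product into the product `⋆`
      (∀ (f g : (E →L[ℝ] ℝ) → ℝ) (hf : f ∈ freeVLA E) (hg : g ∈ freeVLA E)
          (hfg : f * g ∈ freeVLA E)
          (r : ↥(Set.Icc (0 : ℝ) 1)) (u : ↥(Metric.sphere (0 : E →L[ℝ] ℝ) 1)),
          S ⟨f * g, hfg⟩ (r, u) = (r : ℝ) * S ⟨f, hf⟩ (r, u) * S ⟨g, hg⟩ (r, u)) := by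
  choose S hS using fun f : {f // f ∈ freeVLA E} => exists_ext f.1 f.2
  refine ⟨S, fun f r u hr => hS f r u hr,
    fun f u => tendsto_of_ext (S f) f.1 (hS f) u, ?_, ?_, ?_, ?_⟩
  · intro f g hf hg hfg
    refine ext_unique _ _ fun r u hr => ?_
    rw [hS ⟨f + g, hfg⟩ r u hr, ContinuousMap.add_apply,
      hS ⟨f, hf⟩ r u hr, hS ⟨g, hg⟩ r u hr]
    simp [Pi.add_apply, add_div]
  · intro c f hf hcf
    refine ext_unique _ _ fun r u hr => ?_
    rw [hS ⟨c • f, hcf⟩ r u hr, ContinuousMap.smul_apply, hS ⟨f, hf⟩ r u hr]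
    simp [Pi.smul_apply, smul_eq_mul, mul_div_assoc]
  · intro f g hf hg hfg
    refine ext_unique _ _ fun r u hr => ?_
    rw [hS ⟨f ⊔ g, hfg⟩ r u hr, ContinuousMap.sup_apply,
      hS ⟨f, hf⟩ r u hr, hS ⟨g, hg⟩ r u hr]
    have hrpos : (0:ℝ) < r := lt_of_le_of_ne r.2.1 (Ne.symm hr)
    show max (f ((r:ℝ) • u.1)) (g ((r:ℝ) • u.1)) / (r:ℝ) = _
    rw [div_eq_inv_mul, div_eq_inv_mul, div_eq_inv_mul,
      mul_max_of_nonneg _ _ (by positivity)]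
  · intro f g hf hg hfg r u
    have hcont : Continuous fun p : ↥(Set.Icc (0:ℝ) 1) × ↥(Metric.sphere (0 : E →L[ℝ] ℝ) 1) =>
        (p.1 : ℝ) * S ⟨f, hf⟩ p * S ⟨g, hg⟩ p :=
      ((continuous_subtype_val.comp continuous_fst).mul
        (S ⟨f, hf⟩).continuous).mul (S ⟨g, hg⟩).continuous
    have hEq : S ⟨f * g, hfg⟩ = ⟨_, hcont⟩ := by
      refine ext_unique _ _ fun r u hr => (hS ⟨f * g, hfg⟩ r u hr).trans ?_
      show _ = (r : ℝ) * S ⟨f, hf⟩ (r, u) * S ⟨g, hg⟩ (r, u)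
      rw [hS ⟨f, hf⟩ r u hr, hS ⟨g, hg⟩ r u hr]
      field_simp
      rfl
    rw [hEq]
    rfl
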